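/- Let ι be a nonempty finite type, let x : ι → ℝ be nonnegative weights with ∑_{y ∈ ι} x(y) = 1, let N ≥ 1 and Δ ≥ 1 be natural numbers, let η ≥ 1 be a real number, let c : Fin Δ → ℝ be strictly positive constants, and let Φ : Fin N → ι → Fin Δ → ℝ satisfy c(e) ≤ Φ(m, y, e) ≤ c(e)·(1 + log(1 + 1/η)/(2Δ)) for all m ∈ Fin N, y ∈ ι, e ∈ Fin Δ. Then for every m ∈ Fin N, (∑_{y ∈ ι} x(y)·∏_{e ∈ Fin Δ} Φ(m, y, e)) / (∑_{m' ∈ Fin N} ∑_{y ∈ ι} x(y)·∏_{e ∈ Fin Δ} Φ(m', y, e)) ≥ 1/(√2 · N). -/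

import Mathlib

theorem g_m_lower_lemma
    {ι : Type*} [Fintype ι] [Nonempty ι]
    (x : ι → ℝ) (hx : ∀ y, 0 ≤ x y) (hsum : ∑ y, x y = 1)
    (N Δ : ℕ) (hN : 1 ≤ N) (hΔ : 1 ≤ Δ)
    (η : ℝ) (hη : 1 ≤ η)
    (c : Fin Δ → ℝ) (hc : ∀ e, 0 < c e)
    (Φ : Fin N → ι → Fin Δ → ℝ)
    (hΦ : ∀ m y e, c e ≤ Φ m y e ∧
      Φ m y e ≤ c e * (1 + Real.log (1 + 1 / η) / (2 * Δ)))
    (m : Fin N) :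
    (∑ y, x y * ∏ e, Φ m y e) / (∑ m' : Fin N, ∑ y, x y * ∏ e, Φ m' y e)
      ≥ 1 / (Real.sqrt 2 * N) := by
  set L := Real.log (1 + 1 / η) with hLdef
  have hη0 : (0:ℝ) < η := lt_of_lt_of_le one_pos hη
  have hΔ0 : (0:ℝ) < (Δ : ℝ) := by exact_mod_cast hΔ
  have h1η : (0:ℝ) < 1 / η := by positivity
  have hL0 : 0 ≤ L := Real.log_nonneg (by linarith)
  have hL2 : L ≤ Real.log 2 := by
    apply Real.log_le_log (by positivity)
    have : 1 / η ≤ 1 := by rw [div_le_one hη0]; exact hη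
    linarith
  set K := 1 + L / (2 * (Δ:ℝ)) with hKdef
  have hK0 : (1:ℝ) ≤ K := by
    have h : 0 ≤ L / (2 * (Δ:ℝ)) := by positivity
    rw [hKdef]; linarith
  have hKexp : K ≤ Real.exp (L / (2 * (Δ:ℝ))) := by
    have := Real.add_one_le_exp (L / (2 * (Δ:ℝ)))
    linarith
  have hKpow : K ^ Δ ≤ Real.sqrt 2 := by
    calc K ^ Δ ≤ (Real.exp (L / (2 * (Δ:ℝ)))) ^ Δ :=
          pow_le_pow_left₀ (by linarith) hKexp Δ
      _ = Real.exp ((Δ:ℝ) * (L / (2 * (Δ:ℝ)))) := (Real.exp_nat_mul _ Δ).symm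
      _ = Real.exp (L / 2) := by
          congr 1
          field_simp
      _ ≤ Real.exp (Real.log 2 / 2) := Real.exp_le_exp.2 (by linarith)
      _ = Real.sqrt 2 := by
          rw [← Real.log_sqrt (by norm_num),
            Real.exp_log (Real.sqrt_pos.2 two_pos)]
  set P := ∏ e, c e with hPdef
  have hP : 0 < P := Finset.prod_pos (fun e _ => hc e)
  -- per-y bounds on the product
  have hprod_lo : ∀ (m' : Fin N) (y : ι), P ≤ ∏ e, Φ m' y e := fun m' y =>
    Finset.prod_le_prod (fun e _ => (hc e).le) (fun e _ => (hΦ m' y e).1)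
  have hprod_hi : ∀ (m' : Fin N) (y : ι), ∏ e, Φ m' y e ≤ P * Real.sqrt 2 := by
    intro m' y
    calc ∏ e, Φ m' y e ≤ ∏ e : Fin Δ, c e * K :=
          Finset.prod_le_prod (fun e _ => le_trans (hc e).le (hΦ m' y e).1)
            (fun e _ => (hΦ m' y e).2)
      _ = P * K ^ Δ := by
          rw [Finset.prod_mul_distrib, Finset.prod_const, Finset.card_univ,
            Fintype.card_fin]
      _ ≤ P * Real.sqrt 2 := mul_le_mul_of_nonneg_left hKpow hP.le
  -- sum bounds
  have hinner_lo : ∀ m' : Fin N, P ≤ ∑ y, x y * ∏ e, Φ m' y e := by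
    intro m'
    calc P = ∑ y, x y * P := by
          rw [← Finset.sum_mul, hsum, one_mul]
      _ ≤ ∑ y, x y * ∏ e, Φ m' y e :=
          Finset.sum_le_sum (fun y _ =>
            mul_le_mul_of_nonneg_left (hprod_lo m' y) (hx y))
  have hinner_hi : ∀ m' : Fin N, ∑ y, x y * ∏ e, Φ m' y e ≤ P * Real.sqrt 2 := by
    intro m'
    calc ∑ y, x y * ∏ e, Φ m' y e ≤ ∑ y, x y * (P * Real.sqrt 2) :=
          Finset.sum_le_sum (fun y _ =>
            mul_le_mul_of_nonneg_left (hprod_hi m' y) (hx y))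
      _ = P * Real.sqrt 2 := by rw [← Finset.sum_mul, hsum, one_mul]
  set a := ∑ y, x y * ∏ e, Φ m y e with hadef
  set b := ∑ m' : Fin N, ∑ y, x y * ∏ e, Φ m' y e with hbdef
  have hN0 : (0:ℝ) < (N:ℝ) := by exact_mod_cast hN
  have ha : P ≤ a := hinner_lo m
  have hb_hi : b ≤ (N:ℝ) * (P * Real.sqrt 2) := by
    calc b ≤ ∑ _m' : Fin N, P * Real.sqrt 2 :=
          Finset.sum_le_sum (fun m' _ => hinner_hi m')
      _ = (N:ℝ) * (P * Real.sqrt 2) := by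
          rw [Finset.sum_const, Finset.card_univ, Fintype.card_fin, nsmul_eq_mul]
  have hb_lo : (N:ℝ) * P ≤ b := by
    calc (N:ℝ) * P = ∑ _m' : Fin N, P := by
          rw [Finset.sum_const, Finset.card_univ, Fintype.card_fin, nsmul_eq_mul]
      _ ≤ b := Finset.sum_le_sum (fun m' _ => hinner_lo m')
  have hb0 : 0 < b := lt_of_lt_of_le (by positivity) hb_lo
  have hs2 : (0:ℝ) < Real.sqrt 2 := Real.sqrt_pos.2 two_pos
  rw [ge_iff_le, div_le_div_iff₀ (by positivity) hb0]
  have h1 : b ≤ Real.sqrt 2 * (N:ℝ) * P := by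
    have := hb_hi; nlinarith
  have h2 : Real.sqrt 2 * (N:ℝ) * P ≤ Real.sqrt 2 * (N:ℝ) * a :=
    mul_le_mul_of_nonneg_left ha (by positivity)
  nlinarith
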